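/- Let f : (0,∞) → [0,∞) be a nondecreasing function, let n ≥ 2 and C > 0, and suppose that f(r) > 0 for all r > 0 and f(r) ≤ C·f'(r)^(n/(n-1)) for almost every r ∈ (0,r₀), where f' denotes the classical derivative (which exists a.e. since f is monotone) and the distributional derivative of f dominates f'·dr. Then there exists a constant θ₀ > 0 depending only on n and C such that f(r) ≥ θ₀·rⁿ for every r ∈ (0,r₀). -/

import Mathlib

open MeasureTheory Set
open Filter Topology


lemma aux_deriv_nonneg {f : ℝ → ℝ} (hf : MonotoneOn f (Ioi 0)) {r : ℝ} (hr : 0 < r) :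
    0 ≤ deriv f r := by
  by_cases h : DifferentiableAt ℝ f r
  · have h1 : Tendsto (slope f r) (𝓝[>] r) (𝓝 (deriv f r)) :=
      (hasDerivAt_iff_tendsto_slope.mp h.hasDerivAt).mono_left
        (nhdsWithin_mono r (fun y hy => mem_compl_singleton_iff.mpr (ne_of_gt hy)))
    refine ge_of_tendsto h1 ?_
    filter_upwards [self_mem_nhdsWithin] with y hy
    have hry : r < y := hy
    have := hf (mem_Ioi.mpr hr) (mem_Ioi.mpr (hr.trans hry)) hry.le
    rw [slope_def_field]
    exact div_nonneg (by linarith) (by linarith)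
  · simp [deriv_zero_of_not_differentiableAt h]

lemma aux_integrable {f : ℝ → ℝ} (hf : MonotoneOn f (Ioi 0)) {a b : ℝ} (ha : 0 < a)
    (hab : a ≤ b) : IntervalIntegrable (deriv f) volume a b := by
  set c := a / 2 with hc
  have hc0 : 0 < c := by positivity
  have hca : c < a := by rw [hc]; linarith
  set F : ℝ → ℝ := fun x => f (max x c) with hF
  have hFmono : Monotone F := fun x y hxy =>
    hf (mem_Ioi.mpr (lt_max_of_lt_right hc0)) (mem_Ioi.mpr (lt_max_of_lt_right hc0))
      (max_le_max hxy le_rfl)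
  have key : IntegrableOn (deriv F) (Icc a b) volume := by
    have h2 : deriv F =ᵐ[volume]
        fun x => (Measure.rnDeriv hFmono.stieltjesFunction.measure volume x).toReal := by
      filter_upwards [hFmono.ae_hasDerivAt] with x hx using hx.deriv
    have h3 : IntegrableOn
        (fun x => (Measure.rnDeriv hFmono.stieltjesFunction.measure volume x).toReal)
        (Icc a b) volume := by
      apply integrable_toReal_of_lintegral_ne_top
        ((Measure.measurable_rnDeriv _ _).aemeasurable)
      refine (Measure.lintegral_rnDeriv_lt_top_of_measure_ne_top volume ?_).ne
      rw [hFmono.stieltjesFunction.measure_Icc]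
      exact ENNReal.ofReal_ne_top
    exact h3.congr (ae_restrict_of_ae h2.symm)
  have hderiv : EqOn (deriv F) (deriv f) (Icc a b) := by
    intro x hx
    have hEq : F =ᶠ[𝓝 x] f := by
      filter_upwards [Ioi_mem_nhds (lt_of_lt_of_le hca hx.1)] with y hy
      rw [hF]; simp [max_eq_left (le_of_lt (show c < y from hy))]
    exact hEq.deriv_eq
  have : IntegrableOn (deriv f) (Icc a b) volume :=
    key.congr_fun hderiv measurableSet_Icc
  rw [← uIcc_of_le hab] at this
  exact this.intervalIntegrable

lemma aux_concave {n : ℕ} (hn : 1 ≤ n) {x y : ℝ} (hx : 0 < x) (hxy : x ≤ y) :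
    (y - x) * ((n:ℝ)⁻¹ * y ^ ((n:ℝ)⁻¹ - 1)) ≤ y ^ ((n:ℝ)⁻¹) - x ^ ((n:ℝ)⁻¹) := by
  have hy : 0 < y := lt_of_lt_of_le hx hxy
  have hn0 : (0:ℝ) < n := by exact_mod_cast hn
  set σ : ℝ := (n:ℝ)⁻¹ with hσ
  have hσ0 : 0 < σ := by positivity
  set t : ℝ := x / y with ht
  have ht0 : 0 < t := div_pos hx hy
  set u : ℝ := t ^ σ with hu
  have hu0 : 0 < u := Real.rpow_pos_of_pos ht0 _
  have hun : u ^ n = t := Real.rpow_inv_natCast_pow ht0.le (by omega)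
  have hber : 1 + (n:ℝ) * (u - 1) ≤ t := by
    calc 1 + (n:ℝ) * (u - 1) ≤ (1 + (u - 1)) ^ n := one_add_mul_le_pow (by linarith) n
    _ = u ^ n := by ring_nf
    _ = t := hun
  have hu_le : u ≤ 1 + σ * (t - 1) := by
    have h1 : u - 1 ≤ (t - 1) / (n:ℝ) := by
      rw [le_div_iff₀ hn0]; nlinarith
    have h2 : (t - 1) / (n:ℝ) = σ * (t - 1) := by rw [hσ, div_eq_inv_mul]
    linarith [h2 ▸ h1]
  have hxt : x = t * y := by rw [ht]; field_simp
  have hxσ : x ^ σ = u * y ^ σ := by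
    rw [hxt, Real.mul_rpow ht0.le hy.le, hu]
  have hyσ : y ^ (σ - 1) = y ^ σ / y := Real.rpow_sub_one hy.ne' _
  have hY : (0:ℝ) ≤ y ^ σ := Real.rpow_nonneg hy.le _
  have h5 : σ * (1 - t) ≤ 1 - u := by nlinarith
  have hEq : (y - x) * (σ * (y ^ σ / y)) = σ * (1 - t) * y ^ σ := by
    rw [hxt]; field_simp
  rw [hyσ, hxσ, hEq]
  nlinarith [mul_le_mul_of_nonneg_right h5 hY]
set_option maxHeartbeats 1000000

/-- Density lower-bound argument: if a nondecreasing positive function `f` satisfies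
`f(r) ≤ C f'(r)^(n/(n-1))` a.e. on `(0,r₀)` (with the distributional derivative of `f`
dominating `f'·dr`), then `f(r) ≥ θ₀ rⁿ` on `(0,r₀)` for a constant `θ₀ > 0` depending
only on `n` and `C`. -/
theorem stmt1 (n : ℕ) (hn : 2 ≤ n) (C r₀ : ℝ) (hC : 0 < C) (hr₀ : 0 < r₀) :
    ∃ θ₀ : ℝ, 0 < θ₀ ∧ ∀ f : ℝ → ℝ,
      MonotoneOn f (Ioi 0) →
      (∀ r : ℝ, 0 < r → 0 < f r) →
      (∀ a b : ℝ, 0 < a → a ≤ b → b < r₀ → ∫ r in a..b, deriv f r ≤ f b - f a) →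
      (∀ᵐ r ∂(volume : Measure ℝ), r ∈ Ioo 0 r₀ →
        f r ≤ C * deriv f r ^ ((n : ℝ) / ((n : ℝ) - 1))) →
      ∀ r ∈ Ioo 0 r₀, θ₀ * r ^ n ≤ f r := by
  have hn2 : (2:ℝ) ≤ (n:ℝ) := by exact_mod_cast hn
  have hn0 : (0:ℝ) < (n:ℝ) := by linarith
  have hn1 : (0:ℝ) < (n:ℝ) - 1 := by linarith
  set β : ℝ := ((n:ℝ) - 1) / (n:ℝ) with hβdef
  set σ : ℝ := (n:ℝ)⁻¹ with hσdef
  have hβ0 : 0 < β := div_pos hn1 hn0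
  have hσ0 : 0 < σ := by rw [hσdef]; positivity
  have hCβ : 0 < C ^ β := Real.rpow_pos_of_pos hC _
  set K : ℝ := σ / C ^ β with hKdef
  have hK0 : 0 < K := div_pos hσ0 hCβ
  have hσβ : σ - 1 = -β := by rw [hσdef, hβdef]; field_simp; ring
  have hpβ : ((n:ℝ) / ((n:ℝ) - 1)) * β = 1 := by rw [hβdef]; field_simp
  refine ⟨K ^ n, pow_pos hK0 n, ?_⟩
  intro f hmono hpos hFTC hae r hr
  obtain ⟨hr0, hrr₀⟩ := hr
  -- a.e. lower bound on the derivative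
  have hae' : ∀ᵐ ρ ∂(volume : Measure ℝ), ρ ∈ Ioo 0 r₀ → (f ρ / C) ^ β ≤ deriv f ρ := by
    filter_upwards [hae] with ρ h hρ
    have hd : 0 ≤ deriv f ρ := aux_deriv_nonneg hmono hρ.1
    have hfρ : 0 < f ρ := hpos ρ hρ.1
    have h1 : f ρ / C ≤ (deriv f ρ) ^ ((n:ℝ) / ((n:ℝ) - 1)) := by
      rw [div_le_iff₀ hC]; rw [mul_comm]; exact h hρ
    calc (f ρ / C) ^ β ≤ ((deriv f ρ) ^ ((n:ℝ) / ((n:ℝ) - 1))) ^ β :=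
          Real.rpow_le_rpow (by positivity) h1 hβ0.le
      _ = deriv f ρ ^ (((n:ℝ) / ((n:ℝ) - 1)) * β) := (Real.rpow_mul hd _ _).symm
      _ = deriv f ρ := by rw [hpβ, Real.rpow_one]
  -- one-step growth estimate
  have step : ∀ a b : ℝ, 0 < a → a ≤ b → b < r₀ →
      f a + (b - a) * ((f a / C) ^ β) ≤ f b := by
    intro a b ha hab hb
    have hint : IntervalIntegrable (deriv f) volume a b := aux_integrable hmono ha hab
    have hconst : IntervalIntegrable (fun _ : ℝ => (f a / C) ^ β) volume a b :=
      intervalIntegrable_const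
    have hmono' : (fun _ : ℝ => (f a / C) ^ β) ≤ᵐ[volume.restrict (Icc a b)] deriv f := by
      filter_upwards [ae_restrict_of_ae hae', ae_restrict_mem measurableSet_Icc] with ρ h hρmem
      have hρIoo : ρ ∈ Ioo 0 r₀ := ⟨lt_of_lt_of_le ha hρmem.1, lt_of_le_of_lt hρmem.2 hb⟩
      refine le_trans ?_ (h hρIoo)
      have hfa : 0 < f a := hpos a ha
      refine Real.rpow_le_rpow (by positivity) ?_ hβ0.le
      have hfale : f a ≤ f ρ := hmono (mem_Ioi.mpr ha) (mem_Ioi.mpr hρIoo.1) hρmem.1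
      gcongr
    have h2 := intervalIntegral.integral_mono_ae_restrict hab hconst hint hmono'
    rw [intervalIntegral.integral_const, smul_eq_mul] at h2
    have h3 := hFTC a b ha hab hb
    linarith
  -- main estimate for a fixed starting point a
  have key : ∀ a : ℝ, 0 < a → a < r → (r - a) * K ≤ (f r) ^ σ := by
    intro a ha har
    have hfa : 0 < f a := hpos a ha
    have hfr : 0 < f r := hpos r hr0
    have hq : 0 < f a / f r := div_pos hfa hfr
    have bound : ∀ N : ℕ, 1 ≤ N →
        (r - a) * K * ((f a / f r) ^ (β / (N:ℝ))) ≤ (f r) ^ σ - (f a) ^ σ := by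
      intro N hN
      have hNpos : (0:ℝ) < (N:ℝ) := by exact_mod_cast hN
      set h : ℝ := (r - a) / (N:ℝ) with hhdef
      have hhpos : 0 < h := div_pos (by linarith) hNpos
      set x : ℕ → ℝ := fun j => a + (j:ℝ) * h with hxdef
      have hx0 : x 0 = a := by simp [hxdef]
      have hxN : x N = r := by
        rw [hxdef]; dsimp only; rw [hhdef]; field_simp; ring
      have hxpos : ∀ j : ℕ, 0 < x j := by
        intro j; rw [hxdef]
        have : (0:ℝ) ≤ (j:ℝ) * h := by positivity
        dsimp only; linarith
      have hxlt : ∀ j : ℕ, x j < x (j + 1) := by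
        intro j; rw [hxdef]; dsimp only; push_cast; nlinarith
      have hxle : ∀ j : ℕ, j ≤ N → x j ≤ r := by
        intro j hj
        rw [hxdef]; dsimp only
        have h1 : (j:ℝ) ≤ (N:ℝ) := by exact_mod_cast hj
        have h2 : (j:ℝ) * h ≤ (N:ℝ) * h := by nlinarith
        have h3 : a + (N:ℝ) * h = r := by rw [hhdef]; field_simp; ring
        linarith
      have hfx : ∀ j : ℕ, 0 < f (x j) := fun j => hpos _ (hxpos j)
      have hfxmono : ∀ j : ℕ, f (x j) ≤ f (x (j+1)) :=
        fun j => hmono (hxpos j) (hxpos (j+1)) (hxlt j).le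
      -- per-step estimate
      have hstep : ∀ j ∈ Finset.range N,
          h * K * ((f (x j) / f (x (j+1))) ^ β) ≤ (f (x (j+1))) ^ σ - (f (x j)) ^ σ := by
        intro j hj
        rw [Finset.mem_range] at hj
        have hxj1 : x (j+1) ≤ r := hxle (j+1) (by omega)
        have hs := step (x j) (x (j+1)) (hxpos j) (hxlt j).le (lt_of_le_of_lt hxj1 hrr₀)
        have hdiff : x (j+1) - x j = h := by rw [hxdef]; dsimp only; push_cast; ring
        have hs' : f (x j) + h * ((f (x j) / C) ^ β) ≤ f (x (j+1)) := by
          rw [← hdiff]; exact hs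
        have hconc := aux_concave (n := n) (by omega) (hfx j) (hfxmono j)
        have hid : h * K * ((f (x j) / f (x (j+1))) ^ β)
            = (h * ((f (x j) / C) ^ β)) * (σ * (f (x (j+1))) ^ (σ - 1)) := by
          rw [hσβ, Real.rpow_neg (hfx (j+1)).le,
            Real.div_rpow (hfx j).le hC.le, Real.div_rpow (hfx j).le (hfx (j+1)).le, hKdef]
          field_simp
        rw [hid]
        calc (h * ((f (x j) / C) ^ β)) * (σ * (f (x (j+1))) ^ (σ - 1))
            ≤ (f (x (j+1)) - f (x j)) * (σ * (f (x (j+1))) ^ (σ - 1)) := by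
              exact mul_le_mul_of_nonneg_right (by linarith)
                (mul_nonneg hσ0.le (Real.rpow_nonneg (hfx (j+1)).le _))
          _ ≤ (f (x (j+1))) ^ σ - (f (x j)) ^ σ := by
              rw [hσdef]; exact hconc
      -- telescoping sum
      have hsum : ∑ j ∈ Finset.range N, ((f (x (j+1))) ^ σ - (f (x j)) ^ σ)
          = (f r) ^ σ - (f a) ^ σ := by
        rw [Finset.sum_range_sub (fun j => (f (x j)) ^ σ), hx0, hxN]
      have hsum_ge : ∑ j ∈ Finset.range N, (h * K * ((f (x j) / f (x (j+1))) ^ β))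
          ≤ (f r) ^ σ - (f a) ^ σ := by
        rw [← hsum]; exact Finset.sum_le_sum hstep
      -- AM-GM
      have hz : ∀ j ∈ Finset.range N, (0:ℝ) ≤ (f (x j) / f (x (j+1))) ^ β :=
        fun j _ => Real.rpow_nonneg (div_nonneg (hfx j).le (hfx (j+1)).le) _
      have hwsum : ∑ j ∈ Finset.range N, ((N:ℝ)⁻¹) = 1 := by
        rw [Finset.sum_const, Finset.card_range, nsmul_eq_mul, mul_inv_cancel₀ hNpos.ne']
      have hamgm := Real.geom_mean_le_arith_mean_weighted (Finset.range N)
        (fun _ => (N:ℝ)⁻¹) (fun j => (f (x j) / f (x (j+1))) ^ β)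
        (fun _ _ => by positivity) hwsum hz
      -- compute the geometric mean
      have htele : ∀ m : ℕ, ∏ j ∈ Finset.range m, (f (x j) / f (x (j+1))) = f (x 0) / f (x m) := by
        intro m
        induction m with
        | zero => rw [Finset.prod_range_zero, div_self (hfx 0).ne']
        | succ m ih =>
          rw [Finset.prod_range_succ, ih]
          field_simp
          rw [mul_comm (f (x 0)) (f (x m)), mul_div_mul_left _ _ (hfx m).ne']
      have hprod : ∏ j ∈ Finset.range N, ((f (x j) / f (x (j+1))) ^ β) ^ ((N:ℝ)⁻¹)
          = (f a / f r) ^ (β / (N:ℝ)) := by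
        have e1 : ∀ j : ℕ, ((f (x j) / f (x (j+1))) ^ β) ^ ((N:ℝ)⁻¹)
            = (f (x j) / f (x (j+1))) ^ (β / (N:ℝ)) := by
          intro j
          have hdm : β / (N:ℝ) = β * ((N:ℝ))⁻¹ := div_eq_mul_inv β _
          rw [hdm, ← Real.rpow_mul (div_nonneg (hfx j).le (hfx (j+1)).le)]
        simp_rw [e1]
        rw [Real.finset_prod_rpow _ _
          (fun j _ => div_nonneg (hfx j).le (hfx (j+1)).le), htele N, hx0, hxN]
      rw [hprod] at hamgm
      -- combine
      have hsum_eq : ∑ j ∈ Finset.range N, (h * K * ((f (x j) / f (x (j+1))) ^ β))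
          = h * K * ∑ j ∈ Finset.range N, ((f (x j) / f (x (j+1))) ^ β) := by
        rw [Finset.mul_sum]
      have hsum_eq2 : ∑ j ∈ Finset.range N, ((N:ℝ)⁻¹ * ((f (x j) / f (x (j+1))) ^ β))
          = (N:ℝ)⁻¹ * ∑ j ∈ Finset.range N, ((f (x j) / f (x (j+1))) ^ β) := by
        rw [Finset.mul_sum]
      rw [hsum_eq2] at hamgm
      have hS : (N:ℝ) * ((f a / f r) ^ (β / (N:ℝ)))
          ≤ ∑ j ∈ Finset.range N, ((f (x j) / f (x (j+1))) ^ β) := by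
        have := mul_le_mul_of_nonneg_left hamgm hNpos.le
        rw [← mul_assoc, mul_inv_cancel₀ hNpos.ne', one_mul] at this
        exact this
      have hfin : (r - a) * K * ((f a / f r) ^ (β / (N:ℝ)))
          ≤ h * K * ∑ j ∈ Finset.range N, ((f (x j) / f (x (j+1))) ^ β) := by
        have hrw : (r - a) * K * ((f a / f r) ^ (β / (N:ℝ)))
            = (h * K) * ((N:ℝ) * ((f a / f r) ^ (β / (N:ℝ)))) := by
          rw [hhdef]; field_simp
        rw [hrw]
        exact mul_le_mul_of_nonneg_left hS (mul_pos hhpos hK0).le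
      calc (r - a) * K * ((f a / f r) ^ (β / (N:ℝ)))
          ≤ h * K * ∑ j ∈ Finset.range N, ((f (x j) / f (x (j+1))) ^ β) := hfin
        _ = ∑ j ∈ Finset.range N, (h * K * ((f (x j) / f (x (j+1))) ^ β)) := hsum_eq.symm
        _ ≤ (f r) ^ σ - (f a) ^ σ := hsum_ge
    -- take the limit N → ∞
    have htend : Tendsto (fun N : ℕ => (r - a) * K * ((f a / f r) ^ (β / (N:ℝ)))) atTop
        (𝓝 ((r - a) * K)) := by
      have h1 : Tendsto (fun N : ℕ => β / (N:ℝ)) atTop (𝓝 0) :=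
        tendsto_const_div_atTop_nhds_zero_nat β
      have h2 : ContinuousAt (fun e : ℝ => (f a / f r) ^ e) 0 :=
        Real.continuousAt_const_rpow hq.ne'
      have h3 := (h2.tendsto.comp h1)
      rw [Real.rpow_zero] at h3
      have h4 := h3.const_mul ((r - a) * K)
      rw [mul_one] at h4
      exact h4
    have hlim : (r - a) * K ≤ (f r) ^ σ - (f a) ^ σ :=
      le_of_tendsto htend (eventually_atTop.2 ⟨1, fun N hN => bound N hN⟩)
    have : (0:ℝ) ≤ (f a) ^ σ := Real.rpow_nonneg hfa.le _
    linarith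
  -- let a → 0⁺
  have keyr : r * K ≤ (f r) ^ σ := by
    have htend2 : Tendsto (fun a : ℝ => (r - a) * K) (𝓝[>] 0) (𝓝 (r * K)) := by
      have : Tendsto (fun a : ℝ => (r - a) * K) (𝓝 0) (𝓝 ((r - 0) * K)) :=
        ((tendsto_const_nhds.sub tendsto_id).mul tendsto_const_nhds)
      rw [sub_zero] at this
      exact this.mono_left nhdsWithin_le_nhds
    refine le_of_tendsto htend2 ?_
    filter_upwards [Ioo_mem_nhdsGT_of_mem (⟨le_refl (0:ℝ), hr0⟩ : (0:ℝ) ∈ Ico 0 r)]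
      with a ha
    exact key a ha.1 ha.2
  -- conclude
  have hfr : 0 < f r := hpos r hr0
  have hrK : 0 ≤ r * K := by positivity
  have hpow := pow_le_pow_left₀ hrK keyr n
  rw [hσdef] at hpow
  rw [Real.rpow_inv_natCast_pow hfr.le (by omega)] at hpow
  calc K ^ n * r ^ n = (r * K) ^ n := by rw [mul_pow]; ring
    _ ≤ f r := hpow
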